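/- Assume ν̄ᵢ > 0 for all i, U positive definite and W positive semidefinite. The sequence Q₀ = 0, Q_{k+1} = Π_c(Q_k) is monotone nondecreasing in the Loewner order: 0 ⪯ Q₁ ⪯ Q₂ ⪯ ⋯. If moreover there exist a real n×m matrix K̃ and a positive definite n×n matrix S̃ with φ(K̃, S̃) ≺ S̃, then Q_k converges (entrywise) to a positive semidefinite matrix S̄ satisfying S̄ = Π_c(S̄). -/

import Mathlib

open Matrix

/-- The scalar η_I = √(∏_{i∈I} ν̄ᵢ · ∏_{i∉I}(1−ν̄ᵢ)). -/
noncomputable def eta {m : ℕ} (ν : Fin m → ℝ) (I : Finset (Fin m)) : ℝ :=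
  Real.sqrt ((∏ i ∈ I, ν i) * (∏ i ∈ Iᶜ, (1 - ν i)))

/-- The m×m diagonal 0/1 matrix N_I whose i-th diagonal entry is 1 exactly when i ∈ I. -/
def NI {m : ℕ} (I : Finset (Fin m)) : Matrix (Fin m) (Fin m) ℝ :=
  Matrix.diagonal fun i => if i ∈ I then 1 else 0

/-- φ(K,X) = Σ_{I⊆{1,…,m}} η_I² (F_I(K) X F_I(K)ᵀ + V_I(K)), where
F_I(K) = Aᵀ + K N_I Bᵀ and V_I(K) = W + K N_I U N_I Kᵀ. -/
noncomputable def phi {m n : ℕ} (ν : Fin m → ℝ) (A W : Matrix (Fin n) (Fin n) ℝ)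
    (B : Matrix (Fin n) (Fin m) ℝ) (U : Matrix (Fin m) (Fin m) ℝ)
    (K : Matrix (Fin n) (Fin m) ℝ) (X : Matrix (Fin n) (Fin n) ℝ) :
    Matrix (Fin n) (Fin n) ℝ :=
  ∑ I : Finset (Fin m), (eta ν I) ^ 2 •
    ((Aᵀ + K * NI I * Bᵀ) * X * (Aᵀ + K * NI I * Bᵀ)ᵀ + (W + K * NI I * U * NI I * Kᵀ))

/-- M(X) = Σ_{I⊆{1,…,m}} η_I² N_I (U + Bᵀ X B) N_I. -/
noncomputable def Mop {m n : ℕ} (ν : Fin m → ℝ) (B : Matrix (Fin n) (Fin m) ℝ)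
    (U : Matrix (Fin m) (Fin m) ℝ) (X : Matrix (Fin n) (Fin n) ℝ) :
    Matrix (Fin m) (Fin m) ℝ :=
  ∑ I : Finset (Fin m), (eta ν I) ^ 2 • (NI I * (U + Bᵀ * X * B) * NI I)

/-- The modified algebraic Riccati operator
Π_c(X) = Aᵀ X A + W − Aᵀ X B N̄ M(X)⁻¹ N̄ Bᵀ X A, where N̄ = diag(ν̄₁,…,ν̄ₘ). -/
noncomputable def Pic {m n : ℕ} (ν : Fin m → ℝ) (A W : Matrix (Fin n) (Fin n) ℝ)
    (B : Matrix (Fin n) (Fin m) ℝ) (U : Matrix (Fin m) (Fin m) ℝ)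
    (X : Matrix (Fin n) (Fin n) ℝ) : Matrix (Fin n) (Fin n) ℝ :=
  Aᵀ * X * A + W -
    Aᵀ * X * B * Matrix.diagonal ν * (Mop ν B U X)⁻¹ * Matrix.diagonal ν * Bᵀ * X * A

/-! ### Auxiliary material -/

section Helpers

lemma NI_transpose {m : ℕ} (I : Finset (Fin m)) : (NI I)ᵀ = NI I :=
  Matrix.diagonal_transpose _

lemma NI_univ {m : ℕ} : NI (Finset.univ : Finset (Fin m)) = 1 := by
  simp [NI, Matrix.diagonal_one]

variable {p q : ℕ}

lemma herm_transpose_eq {M : Matrix (Fin p) (Fin p) ℝ} (h : M.IsHermitian) : Mᵀ = M := by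
  rw [← Matrix.conjTranspose_eq_transpose_of_trivial]; exact h

lemma isHermitian_of_transpose {M : Matrix (Fin p) (Fin p) ℝ} (h : Mᵀ = M) : M.IsHermitian := by
  rw [Matrix.IsHermitian, Matrix.conjTranspose_eq_transpose_of_trivial]; exact h

lemma psd_form {M : Matrix (Fin p) (Fin p) ℝ} (h : M.PosSemidef) (x : Fin p → ℝ) :
    0 ≤ x ⬝ᵥ M *ᵥ x := by simpa using h.dotProduct_mulVec_nonneg x

lemma posSemidef_smul {c : ℝ} (hc : 0 ≤ c) {M : Matrix (Fin p) (Fin p) ℝ}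
    (hM : M.PosSemidef) : (c • M).PosSemidef := by
  refine Matrix.PosSemidef.of_dotProduct_mulVec_nonneg ?_ ?_
  · rw [Matrix.IsHermitian, Matrix.conjTranspose_smul, star_trivial, hM.1]
  · intro x
    rw [Matrix.smul_mulVec, dotProduct_smul]
    simpa using mul_nonneg hc (psd_form hM x)

lemma sum_mulVec' {ι : Type*} (s : Finset ι) (f : ι → Matrix (Fin p) (Fin p) ℝ)
    (x : Fin p → ℝ) : (∑ i ∈ s, f i) *ᵥ x = ∑ i ∈ s, f i *ᵥ x := by
  classical
  induction s using Finset.induction with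
  | empty => simp
  | insert _ _ h ih => simp [Finset.sum_insert h, Matrix.add_mulVec, ih]

lemma dotProduct_sum' {ι : Type*} (s : Finset ι) (v : Fin p → ℝ) (f : ι → Fin p → ℝ) :
    v ⬝ᵥ (∑ i ∈ s, f i) = ∑ i ∈ s, v ⬝ᵥ f i := by
  classical
  induction s using Finset.induction with
  | empty => simp
  | insert _ _ h ih => simp [Finset.sum_insert h, dotProduct_add, ih]

lemma posSemidef_sum {ι : Type*} (s : Finset ι) (f : ι → Matrix (Fin p) (Fin p) ℝ)
    (h : ∀ i ∈ s, (f i).PosSemidef) : (∑ i ∈ s, f i).PosSemidef := by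
  refine Matrix.PosSemidef.of_dotProduct_mulVec_nonneg ?_ ?_
  · rw [Matrix.IsHermitian, Matrix.conjTranspose_sum]
    exact Finset.sum_congr rfl fun i hi => (h i hi).1
  · intro x
    rw [sum_mulVec', dotProduct_sum']
    exact Finset.sum_nonneg fun i hi => (h i hi).dotProduct_mulVec_nonneg x

lemma posSemidef_conj {M : Matrix (Fin p) (Fin p) ℝ} (hM : M.PosSemidef)
    (F : Matrix (Fin q) (Fin p) ℝ) : (F * M * Fᵀ).PosSemidef := by
  have := hM.mul_mul_conjTranspose_same F
  rwa [Matrix.conjTranspose_eq_transpose_of_trivial] at this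

end Helpers

section Comb
variable {m : ℕ} {ν : Fin m → ℝ} (hν : ∀ i, ν i ∈ Set.Ioc (0:ℝ) 1)
include hν

lemma eta_sq (I : Finset (Fin m)) :
    (eta ν I) ^ 2 = (∏ i ∈ I, ν i) * ∏ i ∈ Iᶜ, (1 - ν i) := by
  rw [eta, Real.sq_sqrt]
  exact mul_nonneg (Finset.prod_nonneg fun i _ => (hν i).1.le)
    (Finset.prod_nonneg fun i _ => by linarith [(hν i).2])

lemma sum_eta_sq : ∑ I : Finset (Fin m), (eta ν I) ^ 2 = 1 := by
  simp_rw [eta_sq hν]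
  rw [← Fintype.prod_add]
  simp

lemma eta_univ_sq_pos : 0 < (eta ν (Finset.univ : Finset (Fin m))) ^ 2 := by
  rw [eta_sq hν]
  simp only [Finset.compl_univ, Finset.prod_empty, mul_one]
  exact Finset.prod_pos fun i _ => (hν i).1

lemma sum_eta_sq_indicator (i : Fin m) :
    ∑ I : Finset (Fin m), (eta ν I) ^ 2 * (if i ∈ I then 1 else 0) = ν i := by
  have key : ∀ I : Finset (Fin m), (eta ν I) ^ 2 * (if i ∈ I then 1 else 0)
      = (∏ j ∈ I, ν j) * ∏ j ∈ Iᶜ, (if j = i then 0 else 1 - ν j) := by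
    intro I
    rw [eta_sq hν]
    by_cases h : i ∈ I
    · simp only [h, if_true, mul_one]
      congr 1
      refine Finset.prod_congr rfl fun j hj => ?_
      have : j ≠ i := by rintro rfl; exact (Finset.mem_compl.mp hj) h
      simp [this]
    · have hi : i ∈ Iᶜ := Finset.mem_compl.mpr h
      simp only [h, if_false, mul_zero]
      rw [Finset.prod_eq_zero hi (by simp), mul_zero]
  simp_rw [key]
  rw [← Fintype.prod_add]
  rw [Fintype.prod_eq_single i (fun j hj => by simp [hj])]
  simp

lemma sum_eta_sq_NI :
    ∑ I : Finset (Fin m), (eta ν I) ^ 2 • NI I = Matrix.diagonal ν := by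
  ext i j
  simp only [Matrix.sum_apply, Matrix.smul_apply, NI, Matrix.diagonal_apply, smul_eq_mul]
  by_cases h : i = j
  · subst h
    simp only [if_pos rfl]
    exact sum_eta_sq_indicator hν i
  · simp [h]

end Comb

section Main
variable {m n : ℕ}

/-- The optimal gain. -/
noncomputable def Kmin (ν : Fin m → ℝ) (A : Matrix (Fin n) (Fin n) ℝ)
    (B : Matrix (Fin n) (Fin m) ℝ) (U : Matrix (Fin m) (Fin m) ℝ)
    (X : Matrix (Fin n) (Fin n) ℝ) : Matrix (Fin n) (Fin m) ℝ :=
  -(Aᵀ * X * B * Matrix.diagonal ν * (Mop ν B U X)⁻¹)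

variable {ν : Fin m → ℝ} {A W : Matrix (Fin n) (Fin n) ℝ} {B : Matrix (Fin n) (Fin m) ℝ}
  {U : Matrix (Fin m) (Fin m) ℝ}

lemma phi_eq (hν : ∀ i, ν i ∈ Set.Ioc (0:ℝ) 1) (K X : _) :
    phi ν A W B U K X =
      (Aᵀ * X * A + W) + Aᵀ * X * B * (Matrix.diagonal ν) * Kᵀ
        + K * (Matrix.diagonal ν) * (Bᵀ * X * A) + K * Mop ν B U X * Kᵀ := by
  have term : ∀ I : Finset (Fin m), (eta ν I) ^ 2 •
      ((Aᵀ + K * NI I * Bᵀ) * X * (Aᵀ + K * NI I * Bᵀ)ᵀ + (W + K * NI I * U * NI I * Kᵀ))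
      = (eta ν I) ^ 2 • (Aᵀ * X * A + W)
        + (eta ν I) ^ 2 • (Aᵀ * X * B * NI I * Kᵀ)
        + (eta ν I) ^ 2 • (K * NI I * (Bᵀ * X * A))
        + (eta ν I) ^ 2 • (K * (NI I * (U + Bᵀ * X * B) * NI I) * Kᵀ) := by
    intro I
    simp only [transpose_add, transpose_mul, transpose_transpose, NI_transpose,
      Matrix.add_mul, Matrix.mul_add, smul_add, Matrix.mul_assoc]
    abel
  rw [phi]
  simp_rw [term]
  rw [Finset.sum_add_distrib, Finset.sum_add_distrib, Finset.sum_add_distrib,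
    ← Finset.sum_smul, sum_eta_sq hν, one_smul]
  have h2 : ∑ I : Finset (Fin m), (eta ν I) ^ 2 • (Aᵀ * X * B * NI I * Kᵀ)
      = Aᵀ * X * B * (Matrix.diagonal ν) * Kᵀ := by
    rw [← sum_eta_sq_NI hν]
    simp only [Matrix.mul_sum, Matrix.sum_mul, Matrix.mul_smul, Matrix.smul_mul,
      Matrix.mul_add, Matrix.add_mul, smul_add, Matrix.mul_assoc]
  have h3 : ∑ I : Finset (Fin m), (eta ν I) ^ 2 • (K * NI I * (Bᵀ * X * A))
      = K * (Matrix.diagonal ν) * (Bᵀ * X * A) := by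
    rw [← sum_eta_sq_NI hν]
    simp only [Matrix.mul_sum, Matrix.sum_mul, Matrix.mul_smul, Matrix.smul_mul,
      Matrix.mul_add, Matrix.add_mul, smul_add, Matrix.mul_assoc]
  have h4 : ∑ I : Finset (Fin m), (eta ν I) ^ 2 • (K * (NI I * (U + Bᵀ * X * B) * NI I) * Kᵀ)
      = K * Mop ν B U X * Kᵀ := by
    rw [Mop]
    simp only [Matrix.mul_sum, Matrix.sum_mul, Matrix.mul_smul, Matrix.smul_mul,
      Matrix.mul_add, Matrix.add_mul, smul_add, Matrix.mul_assoc]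
  rw [h2, h3, h4]

lemma Mop_posDef (hν : ∀ i, ν i ∈ Set.Ioc (0:ℝ) 1) (hU : U.PosDef)
    {X : Matrix (Fin n) (Fin n) ℝ} (hX : X.PosSemidef) : (Mop ν B U X).PosDef := by
  have hC : (U + Bᵀ * X * B).PosDef := by
    have hBXB : (Bᵀ * X * B).PosSemidef := by
      have := posSemidef_conj hX Bᵀ
      rwa [transpose_transpose] at this
    exact hU.add_posSemidef hBXB
  have hterm : ∀ (x : Fin m → ℝ) (I : Finset (Fin m)),
      x ⬝ᵥ ((eta ν I ^ 2) • (NI I * (U + Bᵀ * X * B) * NI I)) *ᵥ x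
      = (eta ν I ^ 2) * ((NI I *ᵥ x) ⬝ᵥ ((U + Bᵀ * X * B) *ᵥ (NI I *ᵥ x))) := by
    intro x I
    have hv : x ᵥ* NI I = NI I *ᵥ x := by
      funext j
      simp [NI, Matrix.mulVec_diagonal, Matrix.vecMul_diagonal, mul_comm]
    rw [Matrix.smul_mulVec, dotProduct_smul, smul_eq_mul]
    congr 1
    rw [← Matrix.mulVec_mulVec, ← Matrix.mulVec_mulVec, Matrix.dotProduct_mulVec, hv]
  refine Matrix.PosDef.of_dotProduct_mulVec_pos ?_ ?_
  · rw [Matrix.IsHermitian, Mop, Matrix.conjTranspose_sum]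
    refine Finset.sum_congr rfl fun I _ => ?_
    rw [Matrix.conjTranspose_smul, star_trivial]
    congr 1
    rw [Matrix.conjTranspose_eq_transpose_of_trivial, Matrix.transpose_mul,
      Matrix.transpose_mul, NI_transpose, herm_transpose_eq hC.isHermitian]
    simp [Matrix.mul_assoc]
  · intro x hx
    rw [star_trivial, Mop, sum_mulVec', dotProduct_sum']
    refine Finset.sum_pos' (fun I _ => ?_) ⟨Finset.univ, Finset.mem_univ _, ?_⟩
    · rw [hterm]
      exact mul_nonneg (sq_nonneg _) (psd_form hC.posSemidef _)
    · rw [hterm, NI_univ, Matrix.one_mulVec]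
      refine mul_pos (eta_univ_sq_pos hν) ?_
      simpa using hC.dotProduct_mulVec_pos hx

lemma phi_posSemidef (hW : W.PosSemidef) (hU : U.PosDef)
    {X : Matrix (Fin n) (Fin n) ℝ} (hX : X.PosSemidef) (K : Matrix (Fin n) (Fin m) ℝ) :
    (phi ν A W B U K X).PosSemidef := by
  rw [phi]
  refine posSemidef_sum _ _ fun I _ => posSemidef_smul (sq_nonneg _) ?_
  refine (posSemidef_conj hX _).add (hW.add ?_)
  have hre : K * NI I * U * NI I * Kᵀ = (K * NI I) * U * (K * NI I)ᵀ := by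
    rw [Matrix.transpose_mul, NI_transpose]
    simp [Matrix.mul_assoc]
  rw [hre]
  exact posSemidef_conj hU.posSemidef _

lemma phi_mono (K : Matrix (Fin n) (Fin m) ℝ) {X Y : Matrix (Fin n) (Fin n) ℝ}
    (hXY : (Y - X).PosSemidef) :
    (phi ν A W B U K Y - phi ν A W B U K X).PosSemidef := by
  have key : phi ν A W B U K Y - phi ν A W B U K X
      = ∑ I : Finset (Fin m), (eta ν I) ^ 2 •
          ((Aᵀ + K * NI I * Bᵀ) * (Y - X) * (Aᵀ + K * NI I * Bᵀ)ᵀ) := by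
    rw [phi, phi, ← Finset.sum_sub_distrib]
    refine Finset.sum_congr rfl fun I _ => ?_
    rw [← smul_sub]
    congr 1
    rw [Matrix.mul_sub, Matrix.sub_mul]
    abel
  rw [key]
  exact posSemidef_sum _ _ fun I _ => posSemidef_smul (sq_nonneg _) (posSemidef_conj hXY _)

lemma phi_decomp (hν : ∀ i, ν i ∈ Set.Ioc (0:ℝ) 1) (hU : U.PosDef)
    {X : Matrix (Fin n) (Fin n) ℝ} (hX : X.PosSemidef) (K : Matrix (Fin n) (Fin m) ℝ) :
    phi ν A W B U K X = Pic ν A W B U X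
      + (K - Kmin ν A B U X) * Mop ν B U X * (K - Kmin ν A B U X)ᵀ := by
  have hMpd : (Mop ν B U X).PosDef := Mop_posDef hν hU hX
  set M := Mop ν B U X with hM
  have hdet : IsUnit M.det := (Matrix.isUnit_iff_isUnit_det M).mp hMpd.isUnit
  have hinv : M⁻¹ * M = 1 := Matrix.nonsing_inv_mul _ hdet
  have hinv' : M * M⁻¹ = 1 := Matrix.mul_nonsing_inv _ hdet
  have hXt : Xᵀ = X := herm_transpose_eq hX.1
  have hMt : Mᵀ = M := herm_transpose_eq hMpd.1
  have hMit : (M⁻¹)ᵀ = M⁻¹ := by rw [Matrix.transpose_nonsing_inv, hMt]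
  have collapse1 : ∀ {r : ℕ} (Z : Matrix (Fin m) (Fin r) ℝ), M⁻¹ * (M * Z) = Z := by
    intro r Z; rw [← Matrix.mul_assoc, hinv, Matrix.one_mul]
  have collapse2 : ∀ {r : ℕ} (Z : Matrix (Fin m) (Fin r) ℝ), M * (M⁻¹ * Z) = Z := by
    intro r Z; rw [← Matrix.mul_assoc, hinv', Matrix.one_mul]
  have hKxT : (Kmin ν A B U X)ᵀ = -(M⁻¹ * (Matrix.diagonal ν * (Bᵀ * (X * A)))) := by
    rw [Kmin, Matrix.transpose_neg]
    simp only [Matrix.transpose_mul, ← hM, hMit, Matrix.diagonal_transpose,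
      Matrix.transpose_transpose, hXt, Matrix.mul_assoc]
  have hsq : (K - Kmin ν A B U X) * M * (K - Kmin ν A B U X)ᵀ
      = K * M * Kᵀ + K * (Matrix.diagonal ν) * (Bᵀ * X * A)
        + Aᵀ * X * B * Matrix.diagonal ν * Kᵀ
        + Aᵀ * X * B * Matrix.diagonal ν * M⁻¹ * Matrix.diagonal ν * Bᵀ * X * A := by
    rw [Matrix.transpose_sub, hKxT, Kmin]
    simp only [← hM, Matrix.sub_mul, Matrix.mul_sub, Matrix.add_mul, Matrix.mul_add,
      Matrix.neg_mul, Matrix.mul_neg, sub_neg_eq_add,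
      Matrix.mul_assoc, collapse1, collapse2]
    abel
  rw [phi_eq hν, Pic, hsq, ← hM]
  simp only [Matrix.mul_assoc]
  abel

lemma Pic_eq_phi (hν : ∀ i, ν i ∈ Set.Ioc (0:ℝ) 1) (hU : U.PosDef)
    {X : Matrix (Fin n) (Fin n) ℝ} (hX : X.PosSemidef) :
    Pic ν A W B U X = phi ν A W B U (Kmin ν A B U X) X := by
  rw [phi_decomp hν hU hX]
  simp

lemma Pic_posSemidef (hν : ∀ i, ν i ∈ Set.Ioc (0:ℝ) 1) (hW : W.PosSemidef) (hU : U.PosDef)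
    {X : Matrix (Fin n) (Fin n) ℝ} (hX : X.PosSemidef) :
    (Pic ν A W B U X).PosSemidef := by
  rw [Pic_eq_phi hν hU hX]
  exact phi_posSemidef hW hU hX _

lemma Pic_le_phi (hν : ∀ i, ν i ∈ Set.Ioc (0:ℝ) 1) (hU : U.PosDef)
    {X : Matrix (Fin n) (Fin n) ℝ} (hX : X.PosSemidef) (K : Matrix (Fin n) (Fin m) ℝ) :
    (phi ν A W B U K X - Pic ν A W B U X).PosSemidef := by
  rw [phi_decomp hν hU hX K, add_sub_cancel_left]
  exact posSemidef_conj (Mop_posDef hν hU hX).posSemidef _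

lemma Pic_mono (hν : ∀ i, ν i ∈ Set.Ioc (0:ℝ) 1) (hU : U.PosDef)
    {X Y : Matrix (Fin n) (Fin n) ℝ} (hX : X.PosSemidef) (hY : Y.PosSemidef)
    (hXY : (Y - X).PosSemidef) :
    (Pic ν A W B U Y - Pic ν A W B U X).PosSemidef := by
  have h1 : Pic ν A W B U Y = phi ν A W B U (Kmin ν A B U Y) Y := Pic_eq_phi hν hU hY
  have key : Pic ν A W B U Y - Pic ν A W B U X
      = (phi ν A W B U (Kmin ν A B U Y) Y - phi ν A W B U (Kmin ν A B U Y) X)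
        + (phi ν A W B U (Kmin ν A B U Y) X - Pic ν A W B U X) := by
    rw [← h1]; abel
  rw [key]
  exact (phi_mono _ hXY).add (Pic_le_phi hν hU hX _)

lemma quad_entries {p : ℕ} (M : Matrix (Fin p) (Fin p) ℝ) (i j : Fin p)
    (hsym : M j i = M i j) :
    M i j = ((Pi.single i 1 + Pi.single j 1) ⬝ᵥ M *ᵥ (Pi.single i 1 + Pi.single j 1)
        - Pi.single i 1 ⬝ᵥ M *ᵥ Pi.single i 1 - Pi.single j 1 ⬝ᵥ M *ᵥ Pi.single j 1) / 2 := by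
  have base : ∀ a b : Fin p, Pi.single a (1:ℝ) ⬝ᵥ M *ᵥ Pi.single b 1 = M a b := by
    intro a b
    rw [Matrix.mulVec_single, single_dotProduct]
    simp
  simp only [Matrix.mulVec_add, dotProduct_add, add_dotProduct, base, hsym]
  ring

end Main

/-- the sequence Q₀ = 0, Q_{k+1} = Π_c(Q_k) is monotone
nondecreasing in the Loewner order (so 0 ⪯ Q₁ ⪯ Q₂ ⪯ ⋯); and if there exist K̃
and S̃ ≻ 0 with φ(K̃, S̃) ≺ S̃, then Q_k converges entrywise to a positive
semidefinite S̄ with S̄ = Π_c(S̄). -/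
theorem Pic_iterates_from_zero (m n : ℕ) (hm : 0 < m) (hn : 0 < n) (ν : Fin m → ℝ)
    (hν : ∀ i, ν i ∈ Set.Ioc (0 : ℝ) 1)
    (A W : Matrix (Fin n) (Fin n) ℝ) (B : Matrix (Fin n) (Fin m) ℝ)
    (U : Matrix (Fin m) (Fin m) ℝ) (hW : W.PosSemidef) (hU : U.PosDef) :
    (∀ k : ℕ,
      ((fun X => Pic ν A W B U X)^[k + 1] 0 -
        (fun X => Pic ν A W B U X)^[k] 0).PosSemidef) ∧
    ((∃ (Ktilde : Matrix (Fin n) (Fin m) ℝ) (Stilde : Matrix (Fin n) (Fin n) ℝ),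
        Stilde.PosDef ∧ (Stilde - phi ν A W B U Ktilde Stilde).PosDef) →
      ∃ Sbar : Matrix (Fin n) (Fin n) ℝ, Sbar.PosSemidef ∧
        Pic ν A W B U Sbar = Sbar ∧
        Filter.Tendsto (fun k : ℕ => (fun X => Pic ν A W B U X)^[k] 0)
          Filter.atTop (nhds Sbar)) := by
  classical
  set f : Matrix (Fin n) (Fin n) ℝ → Matrix (Fin n) (Fin n) ℝ :=
    fun X => Pic ν A W B U X with hf
  set Q : ℕ → Matrix (Fin n) (Fin n) ℝ := fun k => f^[k] (0 : Matrix (Fin n) (Fin n) ℝ)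
    with hQdef
  have hQ0 : Q 0 = 0 := rfl
  have hQsucc : ∀ k, Q (k + 1) = Pic ν A W B U (Q k) := by
    intro k
    simp only [hQdef, Function.iterate_succ_apply', hf]
  have hmain : ∀ k, (Q k).PosSemidef ∧ (Q (k + 1) - Q k).PosSemidef := by
    intro k
    induction k with
    | zero =>
      refine ⟨by rw [hQ0]; exact Matrix.PosSemidef.zero, ?_⟩
      rw [hQsucc, hQ0, sub_zero]
      exact Pic_posSemidef hν hW hU Matrix.PosSemidef.zero
    | succ k ih =>
      have h1 : (Q (k + 1)).PosSemidef := by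
        rw [hQsucc]; exact Pic_posSemidef hν hW hU ih.1
      refine ⟨h1, ?_⟩
      rw [hQsucc (k + 1)]
      nth_rewrite 2 [hQsucc k]
      exact Pic_mono hν hU ih.1 h1 ih.2
  refine ⟨fun k => (hmain k).2, ?_⟩
  rintro ⟨K, S, hS, hphiS⟩
  have hub : ∀ k, (S - Q k).PosSemidef := by
    intro k
    induction k with
    | zero => rw [hQ0, sub_zero]; exact hS.posSemidef
    | succ k ih =>
      have key : S - Q (k + 1) = ((S - phi ν A W B U K S)
          + (phi ν A W B U K S - phi ν A W B U K (Q k)))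
          + (phi ν A W B U K (Q k) - Pic ν A W B U (Q k)) := by
        rw [hQsucc]; abel
      rw [key]
      exact (hphiS.posSemidef.add (phi_mono K ih)).add (Pic_le_phi hν hU (hmain k).1 K)
  have hquad_mono : ∀ x : Fin n → ℝ, Monotone fun k => x ⬝ᵥ Q k *ᵥ x := by
    intro x
    refine monotone_nat_of_le_succ fun k => ?_
    have := psd_form (hmain k).2 x
    rw [Matrix.sub_mulVec, dotProduct_sub] at this
    linarith
  have hquad_bdd : ∀ (x : Fin n → ℝ) (k : ℕ), x ⬝ᵥ Q k *ᵥ x ≤ x ⬝ᵥ S *ᵥ x := by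
    intro x k
    have := psd_form (hub k) x
    rw [Matrix.sub_mulVec, dotProduct_sub] at this
    linarith
  have hconv : ∀ x : Fin n → ℝ,
      ∃ L, Filter.Tendsto (fun k => x ⬝ᵥ Q k *ᵥ x) Filter.atTop (nhds L) := by
    intro x
    exact ⟨_, tendsto_atTop_ciSup (hquad_mono x)
      ⟨x ⬝ᵥ S *ᵥ x, by rintro y ⟨k, rfl⟩; exact hquad_bdd x k⟩⟩
  have hsym : ∀ (k : ℕ) (i j : Fin n), Q k j i = Q k i j := by
    intro k i j
    have := ((hmain k).1).1.apply i j
    simpa using this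
  have hentry : ∀ i j : Fin n,
      ∃ L, Filter.Tendsto (fun k => Q k i j) Filter.atTop (nhds L) := by
    intro i j
    obtain ⟨L1, h1⟩ := hconv (Pi.single i 1 + Pi.single j 1)
    obtain ⟨L2, h2⟩ := hconv (Pi.single i 1)
    obtain ⟨L3, h3⟩ := hconv (Pi.single j 1)
    refine ⟨(L1 - L2 - L3) / 2, ?_⟩
    have key : ∀ k, Q k i j
        = ((Pi.single i 1 + Pi.single j 1) ⬝ᵥ Q k *ᵥ (Pi.single i 1 + Pi.single j 1)
            - Pi.single i 1 ⬝ᵥ Q k *ᵥ Pi.single i 1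
            - Pi.single j 1 ⬝ᵥ Q k *ᵥ Pi.single j 1) / 2 :=
      fun k => quad_entries (Q k) i j (hsym k i j)
    simp_rw [key]
    exact ((h1.sub h2).sub h3).div_const 2
  choose Sb hSb using hentry
  set Sbar : Matrix (Fin n) (Fin n) ℝ := Matrix.of Sb with hSbar
  have hSbar_apply : ∀ i j, Sbar i j = Sb i j := fun i j => rfl
  have htend : Filter.Tendsto Q Filter.atTop (nhds Sbar) := by
    refine tendsto_pi_nhds.mpr ?_
    intro i
    refine tendsto_pi_nhds.mpr ?_
    intro j
    exact hSb i j
  have hcontQF : ∀ x : Fin n → ℝ,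
      Continuous fun M : Matrix (Fin n) (Fin n) ℝ => x ⬝ᵥ M *ᵥ x := fun x =>
    continuous_const.dotProduct (continuous_id.matrix_mulVec continuous_const)
  have hSbarPSD : Sbar.PosSemidef := by
    refine Matrix.PosSemidef.of_dotProduct_mulVec_nonneg ?_ ?_
    · apply isHermitian_of_transpose
      ext i j
      rw [Matrix.transpose_apply]
      have h1 : Filter.Tendsto (fun k => Q k j i) Filter.atTop (nhds (Sbar j i)) := hSb j i
      have heq : (fun k => Q k j i) = fun k => Q k i j := funext fun k => hsym k i j
      have h2 : Filter.Tendsto (fun k => Q k j i) Filter.atTop (nhds (Sbar i j)) := by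
        rw [heq]; exact hSb i j
      exact tendsto_nhds_unique h1 h2
    · intro x
      rw [star_trivial]
      have hx : Filter.Tendsto (fun k => x ⬝ᵥ Q k *ᵥ x) Filter.atTop
          (nhds (x ⬝ᵥ Sbar *ᵥ x)) := ((hcontQF x).tendsto Sbar).comp htend
      exact ge_of_tendsto' hx fun k => psd_form (hmain k).1 x
  have hMopCont : Continuous fun X : Matrix (Fin n) (Fin n) ℝ => Mop ν B U X := by
    refine continuous_finset_sum _ fun I _ => ?_
    exact (((continuous_const.matrix_mul
      (continuous_const.add
        ((continuous_const.matrix_mul continuous_id).matrix_mul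
          continuous_const))).matrix_mul continuous_const)).fun_const_smul _
  have hMSbar : (Mop ν B U Sbar).PosDef := Mop_posDef hν hU hSbarPSD
  have hdet0 : (Mop ν B U Sbar).det ≠ 0 := hMSbar.det_pos.ne'
  have hinvCont : ContinuousAt (fun X : Matrix (Fin n) (Fin n) ℝ => (Mop ν B U X)⁻¹) Sbar := by
    have h1 : ContinuousAt Inv.inv (Mop ν B U Sbar) := by
      apply continuousAt_matrix_inv
      rw [Ring.inverse_eq_inv']
      exact continuousAt_inv₀ hdet0
    exact h1.comp hMopCont.continuousAt
  have hPicCont : ContinuousAt (fun X => Pic ν A W B U X) Sbar := by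
    have hF : Continuous fun p : Matrix (Fin n) (Fin n) ℝ × Matrix (Fin m) (Fin m) ℝ =>
        Aᵀ * p.1 * A + W -
          Aᵀ * p.1 * B * Matrix.diagonal ν * p.2 * Matrix.diagonal ν * Bᵀ * p.1 * A := by
      have c1 : Continuous fun p : Matrix (Fin n) (Fin n) ℝ × Matrix (Fin m) (Fin m) ℝ =>
          Aᵀ * p.1 := continuous_const.matrix_mul continuous_fst
      exact ((c1.matrix_mul continuous_const).add continuous_const).sub
        ((((((c1.matrix_mul continuous_const).matrix_mul continuous_const).matrix_mul
          continuous_snd).matrix_mul continuous_const).matrix_mul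
          continuous_const).matrix_mul continuous_fst |>.matrix_mul continuous_const)
    have hcomp : (fun X => Pic ν A W B U X)
        = (fun p : Matrix (Fin n) (Fin n) ℝ × Matrix (Fin m) (Fin m) ℝ =>
            Aᵀ * p.1 * A + W -
              Aᵀ * p.1 * B * Matrix.diagonal ν * p.2 * Matrix.diagonal ν * Bᵀ * p.1 * A)
          ∘ (fun X => (X, (Mop ν B U X)⁻¹)) := by
      funext X
      simp only [Pic, Function.comp]
    rw [hcomp]
    exact hF.continuousAt.comp (continuousAt_id.prodMk hinvCont)
  have h2 : Filter.Tendsto (fun k => Q (k + 1)) Filter.atTop (nhds Sbar) :=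
    htend.comp (Filter.tendsto_add_atTop_nat 1)
  have h1 : Filter.Tendsto (fun k => Pic ν A W B U (Q k)) Filter.atTop
      (nhds (Pic ν A W B U Sbar)) := hPicCont.tendsto.comp htend
  have h3 : (fun k => Pic ν A W B U (Q k)) = fun k => Q (k + 1) :=
    funext fun k => (hQsucc k).symm
  rw [h3] at h1
  exact ⟨Sbar, hSbarPSD, tendsto_nhds_unique h1 h2, htend⟩
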